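/- arXiv:1503.01086 — 2 statements merged into one kernel-verified Lean document; each statement's English description precedes it below -/
import Mathlib

section
/- For every integer n ≥ 3 (prime or composite), 2·S_n = p_{π(n)}^2 + 2(n + 1 − p_{π(n)})·p_{π(n)+1} + Σ_{k=1}^{π(n)−1} (p_{k+1} − p_k)^2 − n^2 − n, where S_n = Σ_{i=1}^n a_i. -/
open Finset Filter Asymptotics

/-- `a n` is the smallest positive integer such that `n + a n` is prime. -/
noncomputable def a (n : ℕ) : ℕ := sInf {k : ℕ | 0 < k ∧ (n + k).Prime}

/-- `p k` is the `k`-th prime (1-indexed, so `p 1 = 2`). -/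
noncomputable def p (k : ℕ) : ℕ := Nat.nth Nat.Prime (k - 1)

lemma lt_nth_pc (n : ℕ) : n < Nat.nth Nat.Prime n.primeCounting := by
  have h : Nat.count Nat.Prime (n + 1) ≤ n.primeCounting := le_of_eq rfl
  exact lt_of_lt_of_le n.lt_succ_self ((Nat.count_le_iff_le_nth Nat.infinite_setOf_prime).mp h)

lemma a_add (n : ℕ) : n + a n = Nat.nth Nat.Prime n.primeCounting := by
  set q := Nat.nth Nat.Prime n.primeCounting with hq
  have hqp : q.Prime := Nat.prime_nth_prime _
  have hn : n < q := lt_nth_pc n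
  have hmem : q - n ∈ {k : ℕ | 0 < k ∧ (n + k).Prime} := by
    constructor
    · omega
    · have : n + (q - n) = q := by omega
      rw [this]; exact hqp
  have hlb : ∀ k ∈ {k : ℕ | 0 < k ∧ (n + k).Prime}, q - n ≤ k := by
    rintro k ⟨hk0, hkp⟩
    have h1 : Nat.nth Nat.Prime (Nat.count Nat.Prime (n + k)) = n + k :=
      Nat.nth_count hkp
    have h2 : n.primeCounting ≤ Nat.count Nat.Prime (n + k) := by
      have : Nat.count Nat.Prime (n + 1) ≤ Nat.count Nat.Prime (n + k) :=
        Nat.count_monotone _ (by omega)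
      exact this
    have h3 : q ≤ n + k :=
      le_trans ((Nat.nth_le_nth Nat.infinite_setOf_prime).mpr h2) (le_of_eq h1)
    omega
  have : a n = q - n := le_antisymm (Nat.sInf_le hmem) (le_csInf ⟨_, hmem⟩ hlb)
  omega

lemma a_cast (n : ℕ) : (a n : ℤ) = (Nat.nth Nat.Prime n.primeCounting : ℤ) - n := by
  have h := congrArg (Nat.cast : ℕ → ℤ) (a_add n)
  push_cast at h
  linarith

lemma nth_pc_pred_le (n : ℕ) (hn : 1 ≤ n.primeCounting) :
    Nat.nth Nat.Prime (n.primeCounting - 1) ≤ n := by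
  have h : n.primeCounting - 1 < Nat.count Nat.Prime (n + 1) := by
    have : Nat.count Nat.Prime (n + 1) = n.primeCounting := rfl
    omega
  exact Nat.lt_succ_iff.mp ((Nat.lt_nth_iff_count_lt Nat.infinite_setOf_prime).mp h)

lemma pc_succ (n : ℕ) :
    (n + 1).primeCounting = n.primeCounting + if (n + 1).Prime then 1 else 0 := by
  show Nat.count Nat.Prime (n + 2) = Nat.count Nat.Prime (n + 1) + _
  rw [Nat.count_succ]

lemma pc_ge (n : ℕ) (hn : 3 ≤ n) : 2 ≤ n.primeCounting := by
  have h3 : Nat.primeCounting 3 = 2 := by decide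
  have := Nat.monotone_primeCounting hn
  omega

theorem stmt_4 : ∀ n : ℕ, 3 ≤ n →
    2 * (∑ i ∈ Finset.Icc 1 n, (a i : ℤ)) =
      (p (Nat.primeCounting n) : ℤ) ^ 2 +
        2 * ((n : ℤ) + 1 - (p (Nat.primeCounting n) : ℤ)) * (p (Nat.primeCounting n + 1) : ℤ) +
        ∑ k ∈ Finset.Icc 1 (Nat.primeCounting n - 1), ((p (k + 1) : ℤ) - (p k : ℤ)) ^ 2 -
        (n : ℤ) ^ 2 - (n : ℤ) := by
  intro n hn
  induction n, hn using Nat.le_induction with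
  | base =>
    have h0 : Nat.nth Nat.Prime 0 = 2 := Nat.nth_prime_zero_eq_two
    have h1 : Nat.nth Nat.Prime 1 = 3 := Nat.nth_prime_one_eq_three
    have h2 : Nat.nth Nat.Prime 2 = 5 := by
      have := Nat.nth_count (p := Nat.Prime) (n := 5) (by norm_num)
      have hc : Nat.count Nat.Prime 5 = 2 := by decide
      rwa [hc] at this
    have hπ1 : Nat.primeCounting 1 = 0 := by decide
    have hπ2 : Nat.primeCounting 2 = 1 := by decide
    have hπ3 : Nat.primeCounting 3 = 2 := by decide
    have ha1 : (a 1 : ℤ) = 1 := by rw [a_cast, hπ1, h0]; norm_num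
    have ha2 : (a 2 : ℤ) = 1 := by rw [a_cast, hπ2, h1]; norm_num
    have ha3 : (a 3 : ℤ) = 2 := by rw [a_cast, hπ3, h2]; norm_num
    rw [hπ3]
    show 2 * ((a 1 : ℤ) + ((a 2 : ℤ) + ((a 3 : ℤ) + 0))) = _
    rw [ha1, ha2, ha3]
    simp [p, h0, h1, h2]
  | succ n hn ih =>
    have hm2 : 2 ≤ n.primeCounting := pc_ge n hn
    set m := n.primeCounting with hm
    have hsum : ∑ i ∈ Finset.Icc 1 (n + 1), (a i : ℤ)
        = (∑ i ∈ Finset.Icc 1 n, (a i : ℤ)) + (a (n + 1) : ℤ) :=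
      Finset.sum_Icc_succ_top (by omega) _
    by_cases hp : (n + 1).Prime
    · -- n+1 prime case
      have hπ : (n + 1).primeCounting = m + 1 := by rw [pc_succ, if_pos hp]
      have hB : Nat.nth Nat.Prime m = n + 1 := by
        have := Nat.nth_count hp
        have hc : Nat.count Nat.Prime (n + 1) = m := rfl
        rwa [hc] at this
      have ha : (a (n + 1) : ℤ) = (Nat.nth Nat.Prime (m + 1) : ℤ) - (n + 1) := by
        rw [a_cast, hπ]; push_cast; ring
      rw [hπ, hsum, ha]
      have hpm1 : p (m + 1) = Nat.nth Nat.Prime m := by simp [p]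
      have hpm2 : p (m + 1 + 1) = Nat.nth Nat.Prime (m + 1) := by simp [p]
      have hsplit : ∑ k ∈ Finset.Icc 1 (m + 1 - 1), ((p (k + 1) : ℤ) - (p k : ℤ)) ^ 2
          = (∑ k ∈ Finset.Icc 1 (m - 1), ((p (k + 1) : ℤ) - (p k : ℤ)) ^ 2)
            + ((p (m - 1 + 1 + 1) : ℤ) - (p (m - 1 + 1) : ℤ)) ^ 2 := by
        have : m + 1 - 1 = (m - 1) + 1 := by omega
        rw [this]
        exact Finset.sum_Icc_succ_top (by omega) _
      rw [hsplit]
      rw [show m - 1 + 1 + 1 = m + 1 from by omega, show m - 1 + 1 = m from by omega]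
      have hB1 : (p (m + 1) : ℤ) = (n : ℤ) + 1 := by
        rw [hpm1, hB]; push_cast; ring
      have hB2 : (p (m + 1 + 1) : ℤ) = (Nat.nth Nat.Prime (m + 1) : ℤ) := by rw [hpm2]
      rw [hB1, hB2]
      rw [hB1] at ih
      push_cast at ih ⊢
      linear_combination ih
    · -- n+1 not prime
      have hπ : (n + 1).primeCounting = m := by rw [pc_succ, if_neg hp]; ring
      have ha : (a (n + 1) : ℤ) = (Nat.nth Nat.Prime m : ℤ) - (n + 1) := by
        rw [a_cast, hπ]; push_cast; ring
      have hpm1 : p (m + 1) = Nat.nth Nat.Prime m := by simp [p]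
      rw [hπ, hsum, ha]
      rw [hpm1] at ih ⊢
      push_cast at ih ⊢
      linear_combination ih
end

section
/- For every prime p_m (m ≥ 2), Σ_{n ≤ p_m − 1} 1/a_n = 1 + Σ_{i=2}^m (1 + 1/2 + ⋯ + 1/(p_i − p_{i−1})). -/
open Finset Filter Asymptotics

lemma a_eq {i n : ℕ} (h1 : Nat.nth Nat.Prime i ≤ n) (h2 : n < Nat.nth Nat.Prime (i+1)) :
    a n = Nat.nth Nat.Prime (i+1) - n := by
  have hinf := Nat.infinite_setOf_prime
  have hp : (Nat.nth Nat.Prime (i+1)).Prime := Nat.nth_mem_of_infinite hinf (i+1)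
  have hmem : (Nat.nth Nat.Prime (i+1) - n) ∈ {k : ℕ | 0 < k ∧ (n + k).Prime} := by
    constructor
    · omega
    · have : n + (Nat.nth Nat.Prime (i+1) - n) = Nat.nth Nat.Prime (i+1) := by omega
      rw [this]; exact hp
  refine le_antisymm (Nat.sInf_le hmem) ?_
  unfold a
  have hne : {k : ℕ | 0 < k ∧ (n + k).Prime}.Nonempty := ⟨_, hmem⟩
  obtain ⟨hpos, hprime⟩ := Nat.sInf_mem hne
  set k := sInf {k : ℕ | 0 < k ∧ (n + k).Prime}
  have h3 : Nat.nth Nat.Prime i < n + k := by omega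
  have h4 : Nat.nth Nat.Prime (i+1) ≤ n + k := by
    have := Nat.nth_count (p := Nat.Prime) hprime
    rw [← this] at h3 ⊢
    rw [Nat.nth_lt_nth hinf] at h3
    exact (Nat.nth_le_nth hinf).2 h3
  omega

lemma block_sum (i : ℕ) :
    ∑ n ∈ Finset.Icc (Nat.nth Nat.Prime i) (Nat.nth Nat.Prime (i+1) - 1), (1 : ℝ) / a n
      = ∑ j ∈ Finset.Icc 1 (Nat.nth Nat.Prime (i+1) - Nat.nth Nat.Prime i), (1 : ℝ) / j := by
  have hinf := Nat.infinite_setOf_prime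
  have hlt : Nat.nth Nat.Prime i < Nat.nth Nat.Prime (i+1) := (Nat.nth_lt_nth hinf).2 i.lt_succ_self
  refine Finset.sum_nbij' (fun n => Nat.nth Nat.Prime (i+1) - n)
    (fun j => Nat.nth Nat.Prime (i+1) - j) ?_ ?_ ?_ ?_ ?_
  · intro n hn; simp only [Finset.mem_Icc] at *; omega
  · intro j hj; simp only [Finset.mem_Icc] at *; omega
  · intro n hn; simp only [Finset.mem_Icc] at hn; beta_reduce; omega
  · intro j hj; simp only [Finset.mem_Icc] at hj; beta_reduce; omega
  · intro n hn
    simp only [Finset.mem_Icc] at hn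
    rw [a_eq (i := i) (by omega) (by omega)]

lemma a_one : a 1 = 1 := by
  have hmem : (1 : ℕ) ∈ {k : ℕ | 0 < k ∧ (1 + k).Prime} := ⟨one_pos, by norm_num⟩
  obtain ⟨h, -⟩ := Nat.sInf_mem ⟨1, hmem⟩
  have := Nat.sInf_le hmem
  unfold a; omega

lemma a_two : a 2 = 1 := by
  have hmem : (1 : ℕ) ∈ {k : ℕ | 0 < k ∧ (2 + k).Prime} := ⟨one_pos, by norm_num⟩
  obtain ⟨h, -⟩ := Nat.sInf_mem ⟨1, hmem⟩
  have := Nat.sInf_le hmem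
  unfold a; omega

theorem stmt_14 : ∀ m : ℕ, 2 ≤ m →
    ∑ n ∈ Finset.Icc 1 (p m - 1), (1 : ℝ) / a n =
      1 + ∑ i ∈ Finset.Icc 2 m, ∑ j ∈ Finset.Icc 1 (p i - p (i - 1)), (1 : ℝ) / j := by
  have hinf := Nat.infinite_setOf_prime
  intro m hm
  induction m, hm using Nat.le_induction with
  | base =>
    have h2 : p 2 = 3 := Nat.nth_prime_one_eq_three
    have h1 : p 1 = 2 := Nat.nth_prime_zero_eq_two
    rw [h2]
    norm_num [Finset.Icc_self, Finset.sum_singleton, h1, h2, a_one, a_two,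
      Finset.sum_Icc_succ_top (show 1 ≤ 2 by norm_num)]
  | succ n hn ih =>
    have hpn : p n = Nat.nth Nat.Prime (n-1) := rfl
    have hpn1 : p (n+1) = Nat.nth Nat.Prime n := rfl
    have hstep : Nat.nth Nat.Prime (n-1) < Nat.nth Nat.Prime n :=
      (Nat.nth_lt_nth hinf).2 (by omega)
    have hp2 : 2 ≤ p n := (Nat.nth_mem_of_infinite hinf (n-1)).two_le
    -- split LHS
    have hsplit : ∑ x ∈ Finset.Icc 1 (p (n+1) - 1), (1 : ℝ) / a x
        = (∑ x ∈ Finset.Icc 1 (p n - 1), (1 : ℝ) / a x)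
          + ∑ x ∈ Finset.Icc (p n) (p (n+1) - 1), (1 : ℝ) / a x := by
      rw [show Finset.Icc 1 (p (n+1) - 1) = Finset.Ioc 0 (p (n+1) - 1) from
            (Finset.Icc_add_one_left_eq_Ioc 0 _),
          show Finset.Icc 1 (p n - 1) = Finset.Ioc 0 (p n - 1) from (Finset.Icc_add_one_left_eq_Ioc 0 _),
          show Finset.Icc (p n) (p (n+1) - 1) = Finset.Ioc (p n - 1) (p (n+1) - 1) by
            rw [← Finset.Icc_add_one_left_eq_Ioc]; congr 1; omega]
      exact (Finset.sum_Ioc_consecutive _ (by omega) (by rw [hpn, hpn1]; omega)).symm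
    rw [hsplit, ih]
    rw [Finset.sum_Icc_succ_top (by omega : 2 ≤ n+1)]
    have hb := block_sum (n-1)
    rw [show n - 1 + 1 = n by omega] at hb
    rw [← hpn, ← hpn1] at hb
    rw [show (n:ℕ) + 1 - 1 = n from rfl, hb]
    ring
end
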